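/- Let X : ℤ² → ℝ³ be a discrete surface with edges F(n,m) = X(n+1,m) − X(n,m) and G(n,m) = X(n,m+1) − X(n,m). Suppose X is non-degenerate (F(n,m) and G(n,m) are linearly independent over ℝ at every point), isotropic for Q(v) = v₁² + v₂² − v₃² (Q(F(n,m)) = 0 = Q(G(n,m)) for all (n,m)), and satisfies the monotonicity condition F₃(n,m) > 0 and G₃(n,m) > 0 for all (n,m). Then there exist functions φ, ψ : ℤ² → ℂ and α, β : ℤ² → ℝ such that at every point φ(n,m+1) = α·φ + β·ψ, ψ(n+1,m) = β·φ + α·ψ, α² − β² = 1, and F(n,m) = (Re(φ²), −Im(φ²), |φ|²), G(n,m) = (Re(ψ²), −Im(ψ²), |ψ|²). -/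

import Mathlib

noncomputable def zprod (h : ℤ → ℝ) : ℤ → ℝ := fun m =>
  if 0 ≤ m then ∏ k ∈ Finset.range m.toNat, h k
  else ∏ k ∈ Finset.range (-m).toNat, h (-(k : ℤ) - 1)

lemma zprod_rec (h : ℤ → ℝ) (hh : ∀ m, h m * h m = 1) (m : ℤ) :
    zprod h (m + 1) = zprod h m * h m := by
  rcases lt_trichotomy m (-1) with hm | hm | hm
  · have h1 : ¬ (0 ≤ m) := by omega
    have h2 : ¬ (0 ≤ m + 1) := by omega
    have h3 : (-m).toNat = (-(m+1)).toNat + 1 := by omega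
    have key : zprod h m = zprod h (m+1) * h m := by
      simp only [zprod, h1, h2, if_false]
      rw [h3, Finset.prod_range_succ]
      have h4 : (-(((-(m+1)).toNat : ℤ)) - 1) = m := by omega
      rw [h4]
    rw [key, mul_assoc, hh, mul_one]
  · subst hm
    have e1 : zprod h (-1 + 1) = 1 := by norm_num [zprod]
    have e2 : zprod h (-1) = h (-1) := by norm_num [zprod]
    rw [e1, e2, hh]
  · have h1 : 0 ≤ m := by omega
    have h2 : 0 ≤ m + 1 := by omega
    simp only [zprod, h1, h2, if_true]
    have h3 : (m + 1).toNat = m.toNat + 1 := by omega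
    rw [h3, Finset.prod_range_succ]
    have h4 : ((m.toNat : ℤ)) = m := by omega
    rw [h4]

lemma zprod_sq (h : ℤ → ℝ) (hh : ∀ m, h m * h m = 1) (m : ℤ) :
    zprod h m * zprod h m = 1 := by
  unfold zprod
  split_ifs <;>
    (rw [← Finset.prod_mul_distrib]; exact Finset.prod_eq_one fun k _ => hh _)

lemma real_solve (p q r s u v w : ℝ) (hD : p*s - q*r ≠ 0)
    (hre : u*(p*p - q*q) + v*(r*r - s*s) + w*(p*r - q*s) = 0)
    (him : u*(2*(p*q)) + v*(2*(r*s)) + w*(p*s + q*r) = 0)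
    (hn : u*(p*p + q*q) + v*(r*r + s*s) + w*(p*r + q*s) = 0) :
    u = 0 ∧ v = 0 ∧ w = 0 := by
  have hN : p*p + q*q ≠ 0 := by
    intro h
    have hp2 : p * p = 0 := le_antisymm (by nlinarith [mul_self_nonneg q]) (mul_self_nonneg p)
    have hq2 : q * q = 0 := le_antisymm (by nlinarith [mul_self_nonneg p]) (mul_self_nonneg q)
    exact hD (by rw [mul_self_eq_zero.mp hp2, mul_self_eq_zero.mp hq2]; ring)
  have hv : v = 0 := by
    have h2 : v * (2*(p*s - q*r)^2) = 0 := by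
      linear_combination (p*p + q*q)*hn - (p*p - q*q)*hre - (2*(p*q))*him
    rcases mul_eq_zero.mp h2 with h | h
    · exact h
    · exact absurd h (by positivity)
  subst hv
  have hw : w = 0 := by
    have h3 : w * ((p*p+q*q)*(p*s-q*r)) = 0 := by
      linear_combination (p*p-q*q)*him - (2*(p*q))*hre
    rcases mul_eq_zero.mp h3 with h | h
    · exact h
    · exact absurd h (mul_ne_zero hN hD)
  subst hw
  refine ⟨?_, rfl, rfl⟩
  have h4 : u * (p*p+q*q) = 0 := by linear_combination hn
  rcases mul_eq_zero.mp h4 with h | h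
  · exact h
  · exact absurd h hN

lemma decomp (φ ψ z : ℂ) (hD : φ.re*ψ.im - φ.im*ψ.re ≠ 0) :
    ∃ a b : ℝ, z = (a:ℂ)*φ + (b:ℂ)*ψ := by
  refine ⟨(ψ.im*z.re - ψ.re*z.im)/(φ.re*ψ.im - φ.im*ψ.re),
          (φ.re*z.im - φ.im*z.re)/(φ.re*ψ.im - φ.im*ψ.re), ?_⟩
  have hD' : ψ.im * φ.re - ψ.re * φ.im ≠ 0 := by rwa [mul_comm ψ.im, mul_comm ψ.re]
  apply Complex.ext <;>
    simp only [Complex.add_re, Complex.add_im, Complex.mul_re, Complex.mul_im,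
      Complex.ofReal_re, Complex.ofReal_im] <;>
    (field_simp; ring)

lemma pointA (φ ψ φ' ψ' : ℂ)
    (hD : φ.re * ψ.im - φ.im * ψ.re ≠ 0)
    (h1 : φ' ^ 2 - φ ^ 2 = ψ' ^ 2 - ψ ^ 2)
    (h2 : Complex.normSq φ' - Complex.normSq φ = Complex.normSq ψ' - Complex.normSq ψ) :
    ∃ a b e : ℝ, (e = 1 ∨ e = -1) ∧ φ' = (a:ℂ) * φ + (b:ℂ) * ψ ∧
      ψ' = (e:ℂ) * ((b:ℂ) * φ + (a:ℂ) * ψ) ∧ a ^ 2 - b ^ 2 = 1 := by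
  obtain ⟨a, b, hA⟩ := decomp φ ψ φ' hD
  obtain ⟨c, d, hC⟩ := decomp φ ψ ψ' hD
  rw [hA, hC] at h1 h2
  have hre := congrArg Complex.re h1
  have him := congrArg Complex.im h1
  simp only [pow_two, Complex.mul_re, Complex.mul_im, Complex.add_re, Complex.add_im,
    Complex.sub_re, Complex.sub_im, Complex.ofReal_re, Complex.ofReal_im] at hre him
  simp only [Complex.normSq_apply, Complex.add_re, Complex.add_im, Complex.mul_re,
    Complex.mul_im, Complex.ofReal_re, Complex.ofReal_im] at h2
  obtain ⟨hu, hv, hw⟩ :=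
    real_solve φ.re φ.im ψ.re ψ.im (a^2-1-c^2) (b^2-d^2+1) (2*(a*b-c*d)) hD
      (by linear_combination hre) (by linear_combination him) (by linear_combination h2)
  have hab : a^2 - b^2 = 1 := by
    linear_combination (b^2+1)*hu + c^2*hv - ((a*b+c*d)/2)*hw
  have he2 : (a*d - b*c) * (a*d - b*c) = 1 := by
    linear_combination (-(a^2))*hv + (-(b^2))*hu + (a*b)*hw + hab
  have hce : c = (a*d - b*c) * b := by linear_combination c*hv - (d/2)*hw
  have hde : d = (a*d - b*c) * a := by linear_combination (-d)*hu + (c/2)*hw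
  refine ⟨a, b, a*d - b*c, mul_self_eq_one_iff.mp he2, hA, ?_, hab⟩
  have h1C := congrArg (fun x : ℝ => (x:ℂ)) hce
  have h2C := congrArg (fun x : ℝ => (x:ℂ)) hde
  push_cast at h1C h2C
  rw [hC]
  push_cast
  linear_combination φ * h1C + ψ * h2C

/-- Every non-degenerate isotropic discrete surface in ℝ^{2,1} satisfying the
monotonicity condition F₃ > 0, G₃ > 0 arises from a solution of the discrete Dirac equation
via the discrete Weierstrass representation. -/
theorem discrete_weierstrass_R21_converse
    (X : ℤ × ℤ → ℝ × ℝ × ℝ)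
    (F G : ℤ × ℤ → ℝ × ℝ × ℝ)
    (hF : ∀ n m : ℤ, F (n, m) = X (n + 1, m) - X (n, m))
    (hG : ∀ n m : ℤ, G (n, m) = X (n, m + 1) - X (n, m))
    (hnondeg : ∀ n m : ℤ, LinearIndependent ℝ ![F (n, m), G (n, m)])
    (hFiso : ∀ n m : ℤ, (F (n, m)).1 ^ 2 + (F (n, m)).2.1 ^ 2 - (F (n, m)).2.2 ^ 2 = 0)
    (hGiso : ∀ n m : ℤ, (G (n, m)).1 ^ 2 + (G (n, m)).2.1 ^ 2 - (G (n, m)).2.2 ^ 2 = 0)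
    (hFmono : ∀ n m : ℤ, 0 < (F (n, m)).2.2)
    (hGmono : ∀ n m : ℤ, 0 < (G (n, m)).2.2) :
    ∃ (φ ψ : ℤ × ℤ → ℂ) (α β : ℤ × ℤ → ℝ), ∀ n m : ℤ,
      φ (n, m + 1) = (α (n, m) : ℂ) * φ (n, m) + (β (n, m) : ℂ) * ψ (n, m) ∧
      ψ (n + 1, m) = (β (n, m) : ℂ) * φ (n, m) + (α (n, m) : ℂ) * ψ (n, m) ∧
      (α (n, m)) ^ 2 - (β (n, m)) ^ 2 = 1 ∧
      F (n, m) = (((φ (n, m)) ^ 2).re, -((φ (n, m)) ^ 2).im, ‖φ (n, m)‖ ^ 2) ∧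
      G (n, m) = (((ψ (n, m)) ^ 2).re, -((ψ (n, m)) ^ 2).im, ‖ψ (n, m)‖ ^ 2) := by
  classical
  -- choose square roots of the complex edge functions
  have exf : ∀ n m : ℤ, ∃ w : ℂ,
      w ^ 2 = ((F (n,m)).1 : ℂ) - ((F (n,m)).2.1 : ℂ) * Complex.I := fun n m =>
    IsAlgClosed.exists_pow_nat_eq _ (n := 2) (by norm_num)
  have exg : ∀ n m : ℤ, ∃ w : ℂ,
      w ^ 2 = ((G (n,m)).1 : ℂ) - ((G (n,m)).2.1 : ℂ) * Complex.I := fun n m =>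
    IsAlgClosed.exists_pow_nat_eq _ (n := 2) (by norm_num)
  choose φ₀ hφ₀ using exf
  choose ψ₀ hψ₀ using exg
  -- components of the squares
  have hFre : ∀ n m : ℤ, (φ₀ n m ^ 2).re = (F (n,m)).1 := by
    intro n m; rw [hφ₀]; simp
  have hFim : ∀ n m : ℤ, (φ₀ n m ^ 2).im = -(F (n,m)).2.1 := by
    intro n m; rw [hφ₀]; simp
  have hGre : ∀ n m : ℤ, (ψ₀ n m ^ 2).re = (G (n,m)).1 := by
    intro n m; rw [hψ₀]; simp
  have hGim : ∀ n m : ℤ, (ψ₀ n m ^ 2).im = -(G (n,m)).2.1 := by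
    intro n m; rw [hψ₀]; simp
  -- normSq identities
  have hnsgen : ∀ (z : ℂ) (x y t : ℝ), z ^ 2 = (x:ℂ) - (y:ℂ)*Complex.I →
      x^2 + y^2 - t^2 = 0 → 0 < t → Complex.normSq z = t := by
    intro z x y t hz hiso ht
    have hsq : Complex.normSq z ^ 2 = t ^ 2 := by
      rw [← map_pow, hz]
      have h5 : Complex.normSq ((x:ℂ) - (y:ℂ)*Complex.I) = x^2 + y^2 := by
        simp [Complex.normSq_apply, Complex.sub_re, Complex.sub_im, Complex.mul_re,
          Complex.mul_im]
        ring
      rw [h5]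
      linear_combination hiso
    have h0 : 0 ≤ Complex.normSq z := Complex.normSq_nonneg _
    have h2 : (Complex.normSq z - t) * (Complex.normSq z + t) = 0 := by
      linear_combination hsq
    rcases mul_eq_zero.mp h2 with h | h
    · linarith
    · linarith
  have hnsF : ∀ n m : ℤ, Complex.normSq (φ₀ n m) = (F (n,m)).2.2 := fun n m =>
    hnsgen _ _ _ _ (hφ₀ n m) (hFiso n m) (hFmono n m)
  have hnsG : ∀ n m : ℤ, Complex.normSq (ψ₀ n m) = (G (n,m)).2.2 := fun n m =>
    hnsgen _ _ _ _ (hψ₀ n m) (hGiso n m) (hGmono n m)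
  -- non-degeneracy gives linear independence of φ₀, ψ₀ over ℝ
  have hD : ∀ n m : ℤ,
      (φ₀ n m).re * (ψ₀ n m).im - (φ₀ n m).im * (ψ₀ n m).re ≠ 0 := by
    intro n m hD0
    obtain ⟨hGne, hall⟩ := linearIndependent_fin2.mp (hnondeg n m)
    simp only [Matrix.cons_val_zero, Matrix.cons_val_one, Matrix.head_cons] at hall
    have hF3 : (0:ℝ) < (F (n,m)).2.2 := hFmono n m
    have hNφ : (φ₀ n m).re * (φ₀ n m).re + (φ₀ n m).im * (φ₀ n m).im = (F (n,m)).2.2 := by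
      have := hnsF n m; rwa [Complex.normSq_apply] at this
    set lam : ℝ := ((φ₀ n m).re * (ψ₀ n m).re + (φ₀ n m).im * (ψ₀ n m).im) / (F (n,m)).2.2
      with hlam
    have hlin : ψ₀ n m = (lam : ℂ) * φ₀ n m := by
      apply Complex.ext <;>
        simp only [Complex.mul_re, Complex.mul_im, Complex.ofReal_re, Complex.ofReal_im] <;>
        rw [hlam] <;> field_simp
      · linear_combination (-(ψ₀ n m).re)*hNφ - (φ₀ n m).im * hD0
      · linear_combination (-(ψ₀ n m).im)*hNφ + (φ₀ n m).re * hD0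
    have hgf : ((G (n,m)).1 : ℂ) - ((G (n,m)).2.1:ℂ)*Complex.I
        = ((lam^2 : ℝ):ℂ) * (((F (n,m)).1:ℂ) - ((F (n,m)).2.1:ℂ)*Complex.I) := by
      rw [← hψ₀ n m, hlin, ← hφ₀ n m]; push_cast; ring
    have hG1 : (G (n,m)).1 = lam^2 * (F (n,m)).1 := by
      have := congrArg Complex.re hgf
      simp [← Complex.ofReal_pow] at this
      simpa using this
    have hG2 : (G (n,m)).2.1 = lam^2 * (F (n,m)).2.1 := by
      have := congrArg Complex.im hgf
      simp [← Complex.ofReal_pow] at this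
      linarith
    have hG3 : (G (n,m)).2.2 = lam^2 * (F (n,m)).2.2 := by
      rw [← hnsG n m, hlin, map_mul, Complex.normSq_ofReal, ← hnsF n m]; ring
    have hlam2 : lam^2 ≠ 0 := by
      intro h
      have := hGmono n m
      rw [hG3, h, zero_mul] at this
      exact lt_irrefl _ this
    have hlam0 : lam ≠ 0 := fun h => hlam2 (by rw [h]; ring)
    apply hall (lam^2)⁻¹
    have e1 : ((lam^2)⁻¹ • G (n,m)).1 = (F (n,m)).1 := by
      rw [Prod.smul_fst, smul_eq_mul, hG1]; field_simp
    have e2 : ((lam^2)⁻¹ • G (n,m)).2.1 = (F (n,m)).2.1 := by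
      rw [Prod.smul_snd, Prod.smul_fst, smul_eq_mul, hG2]; field_simp
    have e3 : ((lam^2)⁻¹ • G (n,m)).2.2 = (F (n,m)).2.2 := by
      rw [Prod.smul_snd, Prod.smul_snd, smul_eq_mul, hG3]; field_simp
    exact Prod.ext_iff.mpr ⟨e1, Prod.ext_iff.mpr ⟨e2, e3⟩⟩
  -- the discrete surface closing condition
  have hsurf : ∀ n m : ℤ, F (n, m+1) + G (n,m) = G (n+1, m) + F (n,m) := by
    intro n m
    rw [hF n (m+1), hG n m, hG (n+1) m, hF n m]; ring
  have hs1 : ∀ n m : ℤ, (F (n,m+1)).1 + (G (n,m)).1 = (G (n+1,m)).1 + (F (n,m)).1 := by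
    intro n m; have := congrArg (fun v : ℝ × ℝ × ℝ => v.1) (hsurf n m); simpa using this
  have hs2 : ∀ n m : ℤ, (F (n,m+1)).2.1 + (G (n,m)).2.1 = (G (n+1,m)).2.1 + (F (n,m)).2.1 := by
    intro n m; have := congrArg (fun v : ℝ × ℝ × ℝ => v.2.1) (hsurf n m); simpa using this
  have hs3 : ∀ n m : ℤ, (F (n,m+1)).2.2 + (G (n,m)).2.2 = (G (n+1,m)).2.2 + (F (n,m)).2.2 := by
    intro n m; have := congrArg (fun v : ℝ × ℝ × ℝ => v.2.2) (hsurf n m); simpa using this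
  -- the pointwise Dirac-type relation
  have perpoint : ∀ n m : ℤ, ∃ a b e : ℝ, (e = 1 ∨ e = -1) ∧
      φ₀ n (m+1) = (a:ℂ) * φ₀ n m + (b:ℂ) * ψ₀ n m ∧
      ψ₀ (n+1) m = (e:ℂ) * ((b:ℂ) * φ₀ n m + (a:ℂ) * ψ₀ n m) ∧ a^2 - b^2 = 1 := by
    intro n m
    apply pointA _ _ _ _ (hD n m)
    · rw [hφ₀ n (m+1), hφ₀ n m, hψ₀ (n+1) m, hψ₀ n m]
      apply Complex.ext
      · simp only [Complex.sub_re, Complex.ofReal_re, Complex.mul_re, Complex.I_re,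
          Complex.I_im, Complex.ofReal_im]
        have := hs1 n m; linarith [hs1 n m]
      · simp only [Complex.sub_im, Complex.ofReal_im, Complex.mul_im, Complex.I_re,
          Complex.I_im, Complex.ofReal_re]
        linarith [hs2 n m]
    · rw [hnsF n (m+1), hnsF n m, hnsG (n+1) m, hnsG n m]
      linarith [hs3 n m]
  choose a b e he hA hB hab using perpoint
  have hee : ∀ n m : ℤ, e n m * e n m = 1 := by
    intro n m; rcases he n m with h | h <;> rw [h] <;> norm_num
  refine ⟨fun P => ((zprod (e P.1) P.2 : ℝ):ℂ) * φ₀ P.1 P.2, fun P => ψ₀ P.1 P.2,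
    fun P => e P.1 P.2 * a P.1 P.2, fun P => e P.1 P.2 * zprod (e P.1) P.2 * b P.1 P.2, ?_⟩
  intro n m
  dsimp only
  have ht := zprod_rec (e n) (hee n) m
  have htt := zprod_sq (e n) (hee n) m
  have httC : ((zprod (e n) m : ℝ):ℂ) * ((zprod (e n) m : ℝ):ℂ) = 1 := by
    rw [← Complex.ofReal_mul, htt, Complex.ofReal_one]
  refine ⟨?_, ?_, ?_, ?_, ?_⟩
  · rw [ht, hA n m]
    push_cast
    ring
  · rw [hB n m]
    push_cast
    linear_combination (-(((e n m : ℝ):ℂ) * ((b n m : ℝ):ℂ) * φ₀ n m)) * httC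
  · linear_combination (a n m^2 - b n m^2) * (hee n m)
      - (b n m^2 * (e n m)^2) * htt + hab n m
  · have hsq2 : (((zprod (e n) m : ℝ):ℂ) * φ₀ n m)^2 = φ₀ n m ^ 2 := by
      rw [mul_pow, show ((zprod (e n) m : ℝ):ℂ)^2 = 1 by rw [sq]; exact httC, one_mul]
    have habs : ‖((zprod (e n) m : ℝ):ℂ) * φ₀ n m‖ ^ 2 = (F (n,m)).2.2 := by
      rw [Complex.sq_norm, map_mul, Complex.normSq_ofReal, htt, one_mul, hnsF n m]
    rw [hsq2, habs, hFre n m, hFim n m, neg_neg]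
  · have habs : ‖ψ₀ n m‖ ^ 2 = (G (n,m)).2.2 := by
      rw [Complex.sq_norm, hnsG n m]
    rw [habs, hGre n m, hGim n m, neg_neg]
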